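/- arXiv:1407.6831 — 2 statements merged into one kernel-verified Lean document; each statement's English description precedes it below -/
import Mathlib

section
/- Let 0 < p < 1, q = 1 - p, and 0 < w < 1. Set α = wp, β = wq, γ = 1 - w. Let N* be a geometric random variable with P(N* = n) = w^{n-1}(1-w) for n ≥ 1, independent of an i.i.d. Bernoulli(p) sequence ξ₁, ξ₂, .... Let R_ℓ(n) denote the number of maximal runs of 1's of length exactly ℓ among ξ₁,...,ξ_n, and set R* = (R₁(N*-1), R₂(N*-1), ...). Then for any sequence (z_j) of complex numbers with |z_j| ≤ 1, E[∏_{j≥1} z_j^{R*_j}] = γ(1 + ∑_{j≥1} α^j z_j) / (1 - β - β ∑_{j≥1} α^j z_j). -/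
open scoped Classical
open Finset Filter

noncomputable section

/-- Weight (probability) of a Boolean string of length `n` under i.i.d. Bernoulli(p). -/
def wt (p : ℝ) {n : ℕ} (x : Fin n → Bool) : ℝ :=
  ∏ i, (if x i then p else 1 - p)

/-- Extend a finite string by `false`. -/
def pad {n : ℕ} (x : Fin n → Bool) : ℕ → Bool :=
  fun i => if h : i < n then x ⟨i, h⟩ else false

/-- A maximal run of 1's of length exactly `ℓ` starts at position `i` (0-indexed)
within the first `n` positions. -/
def IsRunAt (x : ℕ → Bool) (n i ℓ : ℕ) : Prop :=
  1 ≤ ℓ ∧ i + ℓ ≤ n ∧ (∀ k < ℓ, x (i + k) = true) ∧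
    (i = 0 ∨ x (i - 1) = false) ∧ (i + ℓ = n ∨ x (i + ℓ) = false)

/-- `R_ℓ(n)`: the number of maximal runs of 1's of length exactly `ℓ` in the first `n` tosses. -/
def runCount (x : ℕ → Bool) (n ℓ : ℕ) : ℕ :=
  ((Finset.range n).filter (fun i => IsRunAt x n i ℓ)).card

/-- `G_ℓ(n)`: the number of maximal runs of 1's of length at least `ℓ` in the first `n` tosses. -/
def excCount (x : ℕ → Bool) (n ℓ : ℕ) : ℕ :=
  ∑ k ∈ Finset.Icc ℓ n, runCount x n k

/-- `L(n)`: the length of the longest run of 1's in the first `n` tosses. -/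
def longestRun (x : ℕ → Bool) (n : ℕ) : ℕ :=
  (Finset.range (n + 1)).sup
    (fun ℓ => if ∃ i, i + ℓ ≤ n ∧ ∀ k < ℓ, x (i + k) = true then ℓ else 0)

/-- Expectation of a (real) functional of `n` i.i.d. Bernoulli(p) tosses. -/
def Ex (p : ℝ) (n : ℕ) (f : (ℕ → Bool) → ℝ) : ℝ :=
  ∑ x : Fin n → Bool, wt p x * f (pad x)

/-- Expectation of a complex functional of `n` i.i.d. Bernoulli(p) tosses. -/
def ExC (p : ℝ) (n : ℕ) (f : (ℕ → Bool) → ℂ) : ℂ :=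
  ∑ x : Fin n → Bool, (wt p x : ℂ) * f (pad x)

/-- Probability of an event depending on the first `n` i.i.d. Bernoulli(p) tosses. -/
def Pr (p : ℝ) (n : ℕ) (A : Set (ℕ → Bool)) : ℝ :=
  ∑ x : Fin n → Bool, if pad x ∈ A then wt p x else 0

/-- Binomial coefficient with integer upper argument, vanishing for negative upper argument. -/
def C (a : ℤ) (b : ℕ) : ℝ :=
  if a < 0 then 0 else (a.toNat).choose b

lemma isRunAt_congr {x y : ℕ → Bool} {n : ℕ} (h : ∀ i < n, x i = y i) {i ℓ : ℕ} (hi : i < n) :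
    IsRunAt x n i ℓ → IsRunAt y n i ℓ := by
  rintro ⟨h1, h2, h3, h4, h5⟩
  refine ⟨h1, h2, fun k hk => ?_, ?_, ?_⟩
  · rw [← h _ (by omega)]; exact h3 k hk
  · rcases h4 with h4 | h4
    · exact Or.inl h4
    · exact Or.inr (by rw [← h _ (by omega)]; exact h4)
  · rcases h5 with h5 | h5
    · exact Or.inl h5
    · rcases eq_or_lt_of_le h2 with he | hl
      · exact Or.inl he
      · exact Or.inr (by rw [← h _ hl]; exact h5)

lemma runCount_congr {x y : ℕ → Bool} {n : ℕ} (h : ∀ i < n, x i = y i) (ℓ : ℕ) :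
    runCount x n ℓ = runCount y n ℓ := by
  unfold runCount
  congr 1
  apply Finset.filter_congr
  intro i hi
  simp only [Finset.mem_range] at hi
  constructor
  · exact isRunAt_congr h hi
  · exact isRunAt_congr (fun i hi => (h i hi).symm) hi

lemma runCount_sum (x : ℕ → Bool) (n ℓ : ℕ) :
    runCount x n ℓ = ∑ i ∈ Finset.range n, if IsRunAt x n i ℓ then 1 else 0 := by
  rw [runCount, Finset.card_filter]

lemma runCount_allTrue {x : ℕ → Bool} {n k : ℕ} (hk : 1 ≤ k) (ht : ∀ i < n, x i = true) :
    runCount x n k = if k = n then 1 else 0 := by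
  rw [runCount_sum]
  have key : ∀ i ∈ Finset.range n, (if IsRunAt x n i k then 1 else 0) =
      (if i = 0 ∧ k = n then 1 else 0) := by
    intro i hi
    simp only [Finset.mem_range] at hi
    congr 1
    simp only [eq_iff_iff]
    constructor
    · rintro ⟨h1, h2, h3, h4, h5⟩
      have hi0 : i = 0 := by
        rcases h4 with h4 | h4
        · exact h4
        · have := ht (i - 1) (by omega); rw [this] at h4; exact absurd h4 (by simp)
      refine ⟨hi0, ?_⟩
      rcases h5 with h5 | h5
      · omega
      · rcases eq_or_lt_of_le h2 with he | hl
        · omega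
        · have := ht (i + k) hl; rw [this] at h5; exact absurd h5 (by simp)
    · rintro ⟨rfl, rfl⟩
      exact ⟨hk, by omega, fun k' hk' => ht _ (by omega), Or.inl rfl, Or.inl (by omega)⟩
  rw [Finset.sum_congr rfl key]
  by_cases hkn : k = n
  · subst hkn
    rw [Finset.sum_eq_single 0]
    · simp
    · intro b _ hb; simp [hb]
    · intro h; simp only [Finset.mem_range] at h; omega
  · simp [hkn]

lemma runCount_shift {x : ℕ → Bool} {n j k : ℕ} (hjn : j < n)
    (ht : ∀ i < j, x i = true) (hf : x j = false) (hk : 1 ≤ k) :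
    runCount x n k = (if k = j then 1 else 0) + runCount (fun i => x (j + 1 + i)) (n - (j + 1)) k := by
  rw [runCount_sum, runCount_sum]
  have hsplit : Finset.range n = Finset.Ico 0 n := by rw [Finset.range_eq_Ico]
  rw [hsplit, ← Finset.sum_Ico_consecutive _ (Nat.zero_le (j+1)) (by omega : j + 1 ≤ n)]
  congr 1
  · -- sum over Ico 0 (j+1)
    rw [← Finset.range_eq_Ico]
    have key : ∀ i ∈ Finset.range (j+1), (if IsRunAt x n i k then 1 else 0) =
        (if i = 0 ∧ k = j then 1 else 0) := by
      intro i hi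
      simp only [Finset.mem_range] at hi
      congr 1
      simp only [eq_iff_iff]
      constructor
      · rintro ⟨h1, h2, h3, h4, h5⟩
        have hi0 : i = 0 := by
          rcases h4 with h4 | h4
          · exact h4
          · by_contra hne
            have := ht (i - 1) (by omega); rw [this] at h4; exact absurd h4 (by simp)
        subst hi0
        refine ⟨rfl, ?_⟩
        have hkj : ¬ (j < k) := by
          intro hlt
          have := h3 j (by omega)
          simp only [Nat.zero_add] at this
          rw [this] at hf; exact absurd hf (by simp)
        have hkj2 : ¬ (k < j) := by
          intro hlt
          rcases h5 with h5 | h5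
          · omega
          · have := ht k (by omega)
            simp only [Nat.zero_add] at h5
            rw [this] at h5; exact absurd h5 (by simp)
        omega
      · rintro ⟨rfl, rfl⟩
        exact ⟨hk, by omega, fun k' hk' => ht _ (by omega), Or.inl rfl,
          Or.inr (by simpa using hf)⟩
    rw [Finset.sum_congr rfl key]
    rw [Finset.sum_eq_single 0]
    · simp
    · intro b _ hb; simp [hb]
    · intro h; simp only [Finset.mem_range] at h; omega
  · -- sum over Ico (j+1) n
    rw [Finset.sum_Ico_eq_sum_range]
    apply Finset.sum_congr rfl
    intro i _
    congr 1
    simp only [eq_iff_iff]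
    constructor
    · rintro ⟨h1, h2, h3, h4, h5⟩
      refine ⟨h1, by omega, fun k' hk' => ?_, ?_, ?_⟩
      · have := h3 k' hk'
        simpa [show j + 1 + (i + k') = j + 1 + i + k' by ring] using this
      · rcases Nat.eq_zero_or_pos i with rfl | hpos
        · exact Or.inl rfl
        · rcases h4 with h4 | h4
          · omega
          · exact Or.inr (by simpa [show j + 1 + (i - 1) = j + 1 + i - 1 by omega] using h4)
      · rcases h5 with h5 | h5
        · exact Or.inl (by omega)
        · exact Or.inr (by simpa [show j + 1 + (i + k) = j + 1 + i + k by ring] using h5)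
    · rintro ⟨h1, h2, h3, h4, h5⟩
      refine ⟨h1, by omega, fun k' hk' => ?_, ?_, ?_⟩
      · have := h3 k' hk'
        simpa [show j + 1 + (i + k') = j + 1 + i + k' by ring] using this
      · rcases h4 with rfl | h4
        · exact Or.inr (by simpa using hf)
        · refine Or.inr ?_
          rcases Nat.eq_zero_or_pos i with rfl | hpos
          · simpa using hf
          · simpa [show j + 1 + i - 1 = j + 1 + (i - 1) by omega] using h4
      · rcases h5 with h5 | h5
        · exact Or.inl (by omega)
        · exact Or.inr (by simpa [show j + 1 + (i + k) = j + 1 + i + k by ring] using h5)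

/-- `ζ`: z with the convention `ζ 0 = 1`. -/
def zeta (z : ℕ → ℂ) (j : ℕ) : ℂ := if j = 0 then 1 else z j

/-- The run-generating product on board `n`. -/
def Q (z : ℕ → ℂ) (x : ℕ → Bool) (n : ℕ) : ℂ :=
  ∏ k ∈ Finset.range n, z (k + 1) ^ runCount x n (k + 1)

lemma runCount_eq_zero_of_gt {x : ℕ → Bool} {n k : ℕ} (h : n < k) : runCount x n k = 0 := by
  rw [runCount, Finset.card_eq_zero, Finset.filter_eq_empty_iff]
  rintro i hi ⟨h1, h2, h3, h4, h5⟩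
  omega

lemma Q_congr {x y : ℕ → Bool} {n : ℕ} (z : ℕ → ℂ) (h : ∀ i < n, x i = y i) :
    Q z x n = Q z y n := by
  unfold Q
  exact Finset.prod_congr rfl fun k _ => by rw [runCount_congr h]

lemma Q_board (z : ℕ → ℂ) (x : ℕ → Bool) {n N : ℕ} (h : n ≤ N) :
    ∏ k ∈ Finset.range N, z (k + 1) ^ runCount x n (k + 1) = Q z x n := by
  unfold Q
  symm
  apply Finset.prod_subset (Finset.range_subset_range.2 h)
  intro k _ hk
  simp only [Finset.mem_range, not_lt] at hk
  rw [runCount_eq_zero_of_gt (by omega), pow_zero]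

lemma Q_allTrue {x : ℕ → Bool} {n : ℕ} (z : ℕ → ℂ) (ht : ∀ i < n, x i = true) :
    Q z x n = zeta z n := by
  rcases Nat.eq_zero_or_pos n with rfl | hn
  · simp [Q, zeta]
  · unfold Q
    rw [Finset.prod_eq_single (n - 1)]
    · rw [runCount_allTrue (by omega) ht, if_pos (by omega)]
      simp [zeta, show n - 1 + 1 = n by omega, show n ≠ 0 by omega]
    · intro k _ hk
      rw [runCount_allTrue (by omega) ht, if_neg (by omega), pow_zero]
    · intro h
      simp only [Finset.mem_range] at h
      omega

lemma Q_shift {x : ℕ → Bool} {n j : ℕ} (z : ℕ → ℂ) (hjn : j < n)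
    (ht : ∀ i < j, x i = true) (hf : x j = false) :
    Q z x n = zeta z j * Q z (fun i => x (j + 1 + i)) (n - (j + 1)) := by
  have key : Q z x n = (∏ k ∈ Finset.range n, z (k + 1) ^ (if k + 1 = j then 1 else 0)) *
      ∏ k ∈ Finset.range n, z (k + 1) ^ runCount (fun i => x (j + 1 + i)) (n - (j + 1)) (k + 1) := by
    unfold Q
    rw [← Finset.prod_mul_distrib]
    apply Finset.prod_congr rfl
    intro k _
    rw [← pow_add, runCount_shift hjn ht hf (by omega)]
  rw [key, Q_board z _ (by omega : n - (j + 1) ≤ n)]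
  congr 1
  rcases Nat.eq_zero_or_pos j with rfl | hj
  · rw [Finset.prod_eq_one fun k _ => by rw [if_neg (by omega), pow_zero]]
    simp [zeta]
  · rw [Finset.prod_eq_single (j - 1)]
    · rw [if_pos (by omega), pow_one]
      simp [zeta, show j - 1 + 1 = j by omega, show j ≠ 0 by omega]
    · intro k _ hk
      rw [if_neg (by omega), pow_zero]
    · intro h
      simp only [Finset.mem_range] at h
      omega

/-- Extend a finite string by `m` leading `true`s, then pad with `false`. -/
def ex (m : ℕ) {n : ℕ} (x : Fin n → Bool) : ℕ → Bool :=
  fun i => if i < m then true else if h : i - m < n then x ⟨i - m, h⟩ else false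

def H (p : ℝ) (z : ℕ → ℂ) (n m : ℕ) : ℂ :=
  ∑ x : Fin n → Bool, (wt p x : ℂ) * Q z (ex m x) (m + n)

def F (p : ℝ) (z : ℕ → ℂ) (n : ℕ) : ℂ := H p z n 0

lemma H_zero (p : ℝ) (z : ℕ → ℂ) (m : ℕ) : H p z 0 m = zeta z m := by
  rw [H]
  have huniv : (Finset.univ : Finset (Fin 0 → Bool)) = {fun i => false} :=
    Finset.eq_singleton_iff_unique_mem.2
      ⟨Finset.mem_univ _, fun y _ => funext fun i => i.elim0⟩
  rw [huniv, Finset.sum_singleton]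
  rw [Q_allTrue z (fun i hi => by simp only [ex]; rw [if_pos (by omega)])]
  simp [wt]

lemma Q_ex_cons_false (z : ℕ → ℂ) (m : ℕ) {n : ℕ} (y : Fin n → Bool) :
    Q z (ex m (Fin.cons false y : Fin (n + 1) → Bool)) (m + (n + 1)) =
      zeta z m * Q z (ex 0 y) (0 + n) := by
  have hf : ex m (Fin.cons false y : Fin (n + 1) → Bool) m = false := by
    unfold ex
    rw [if_neg (by omega), dif_pos (by omega : m - m < n + 1)]
    have h0 : (⟨m - m, by omega⟩ : Fin (n + 1)) = 0 := by ext; simp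
    rw [h0, Fin.cons_zero]
  rw [Q_shift z (show m < m + (n + 1) by omega)
    (fun i hi => by simp only [ex]; rw [if_pos hi]) hf]
  congr 1
  rw [show m + (n + 1) - (m + 1) = n by omega, show (0 : ℕ) + n = n by omega]
  apply Q_congr
  intro i hi
  show ex m (Fin.cons false y) (m + 1 + i) = ex 0 y i
  unfold ex
  rw [if_neg (by omega), if_neg (by omega), dif_pos (show m + 1 + i - m < n + 1 by omega),
    dif_pos (show i - 0 < n by omega)]
  have h1 : (⟨m + 1 + i - m, show m + 1 + i - m < n + 1 by omega⟩ : Fin (n + 1)) =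
      Fin.succ ⟨i - 0, show i - 0 < n by omega⟩ := by ext; simp [Fin.succ]; omega
  rw [h1, Fin.cons_succ]

lemma wt_cons (p : ℝ) {n : ℕ} (b : Bool) (y : Fin n → Bool) :
    wt p (Fin.cons b y) = (if b then p else 1 - p) * wt p y := by
  rw [wt, Fin.prod_univ_succ]
  simp [wt]

lemma ex_cons_true (m : ℕ) {n : ℕ} (y : Fin n → Bool) :
    ex m (Fin.cons true y : Fin (n + 1) → Bool) = ex (m + 1) y := by
  funext i
  unfold ex
  rcases lt_trichotomy i m with h | rfl | h
  · rw [if_pos h, if_pos (by omega)]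
  · rw [if_neg (by omega), if_pos (by omega), dif_pos (by omega)]
    have : (⟨i - i, by omega⟩ : Fin (n + 1)) = 0 := by ext; simp
    rw [this, Fin.cons_zero]
  · rw [if_neg (by omega), if_neg (by omega)]
    by_cases h2 : i - m < n + 1
    · rw [dif_pos h2, dif_pos (by omega)]
      have : (⟨i - m, h2⟩ : Fin (n + 1)) = Fin.succ ⟨i - (m + 1), by omega⟩ := by
        ext; simp [Fin.succ]; omega
      rw [this, Fin.cons_succ]
    · rw [dif_neg h2, dif_neg (by omega)]

lemma H_succ (p : ℝ) (z : ℕ → ℂ) (n m : ℕ) :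
    H p z (n + 1) m = p * H p z n (m + 1) + (1 - p) * zeta z m * H p z n 0 := by
  have hsum : ∀ f : (Fin (n + 1) → Bool) → ℂ,
      ∑ x : Fin (n + 1) → Bool, f x = ∑ b : Bool, ∑ y : Fin n → Bool, f (Fin.cons b y) := by
    intro f
    rw [← (Fin.consEquiv (fun _ => Bool)).sum_comp f, Fintype.sum_prod_type]
    rfl
  rw [H, hsum, Fintype.sum_bool]
  congr 1
  · -- b = true : p * H n (m+1)
    rw [H, Finset.mul_sum]
    apply Finset.sum_congr rfl
    intro y _
    rw [wt_cons, ex_cons_true, show m + (n + 1) = m + 1 + n by omega]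
    simp only [if_true]
    push_cast
    ring
  · -- b = false : (1-p) * zeta m * H n 0
    rw [H, Finset.mul_sum]
    apply Finset.sum_congr rfl
    intro y _
    rw [wt_cons, Q_ex_cons_false]
    simp only [Bool.false_eq_true, if_false]
    push_cast
    ring

lemma H_formula (p : ℝ) (z : ℕ → ℂ) : ∀ n m, H p z n m =
    (p : ℂ) ^ n * zeta z (m + n) +
      (1 - (p : ℂ)) * ∑ j ∈ Finset.range n, (p : ℂ) ^ j * zeta z (m + j) * F p z (n - 1 - j)
  | 0, m => by simp [H_zero]
  | (n + 1), m => by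
    rw [H_succ, H_formula p z n (m + 1)]
    rw [Finset.sum_range_succ']
    have e1 : ∀ j ∈ Finset.range n,
        (p : ℂ) ^ (j + 1) * zeta z (m + (j + 1)) * F p z (n + 1 - 1 - (j + 1)) =
          (p : ℂ) * ((p : ℂ) ^ j * zeta z (m + 1 + j) * F p z (n - 1 - j)) := by
      intro j _
      rw [show m + (j + 1) = m + 1 + j by omega, show n + 1 - 1 - (j + 1) = n - 1 - j by omega]
      ring
    rw [Finset.sum_congr rfl e1, ← Finset.mul_sum]
    rw [show m + (n + 1) = m + 1 + n by omega, show n + 1 - 1 - 0 = n by omega]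
    unfold F
    simp only [pow_zero, Nat.add_zero, one_mul]
    ring

lemma F_rec (p : ℝ) (z : ℕ → ℂ) (n : ℕ) :
    F p z n = (p : ℂ) ^ n * zeta z n +
      (1 - (p : ℂ)) * ∑ j ∈ Finset.range n, (p : ℂ) ^ j * zeta z j * F p z (n - 1 - j) := by
  have h := H_formula p z n 0
  show H p z n 0 = _
  simpa using h

/-- sum over all strings splits by the first coordinate (generic version). -/
lemma sumCons {M : Type*} [AddCommMonoid M] {n : ℕ} (f : (Fin (n + 1) → Bool) → M) :
    ∑ x : Fin (n + 1) → Bool, f x = ∑ b : Bool, ∑ y : Fin n → Bool, f (Fin.cons b y) := by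
  rw [← (Fin.consEquiv (fun _ => Bool)).sum_comp f, Fintype.sum_prod_type]
  rfl

lemma wt_nonneg {p : ℝ} (hp0 : 0 ≤ p) (hp1 : p ≤ 1) {n : ℕ} (x : Fin n → Bool) :
    0 ≤ wt p x := by
  apply Finset.prod_nonneg
  intro i _
  split <;> linarith

lemma wt_sum (p : ℝ) : ∀ n : ℕ, ∑ x : Fin n → Bool, wt p x = 1
  | 0 => by
    have huniv : (Finset.univ : Finset (Fin 0 → Bool)) = {fun i => false} :=
      Finset.eq_singleton_iff_unique_mem.2
        ⟨Finset.mem_univ _, fun y _ => funext fun i => i.elim0⟩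
    rw [huniv, Finset.sum_singleton]
    simp [wt]
  | (n + 1) => by
    rw [sumCons, Fintype.sum_bool]
    have e : ∀ b, ∑ y : Fin n → Bool, wt p (Fin.cons b y) =
        (if b then p else 1 - p) * ∑ y : Fin n → Bool, wt p y := by
      intro b
      rw [Finset.mul_sum]
      exact Finset.sum_congr rfl fun y _ => wt_cons p b y
    rw [e, e, wt_sum p n]
    simp

lemma norm_Q_le {z : ℕ → ℂ} (hz : ∀ j, ‖z j‖ ≤ 1) (x : ℕ → Bool) (n : ℕ) :
    ‖Q z x n‖ ≤ 1 := by
  refine le_trans (norm_prod_le _ _) (Finset.prod_le_one (fun k _ => norm_nonneg _) ?_)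
  intro k _
  rw [norm_pow]
  exact pow_le_one₀ (norm_nonneg _) (hz _)

lemma norm_F_le {p : ℝ} (hp0 : 0 ≤ p) (hp1 : p ≤ 1) {z : ℕ → ℂ} (hz : ∀ j, ‖z j‖ ≤ 1)
    (n : ℕ) : ‖F p z n‖ ≤ 1 := by
  unfold F H
  refine le_trans (norm_sum_le _ _) ?_
  rw [← wt_sum p n]
  apply Finset.sum_le_sum
  intro x _
  rw [norm_mul, Complex.norm_real, Real.norm_eq_abs, abs_of_nonneg (wt_nonneg hp0 hp1 x)]
  calc wt p x * ‖Q z (ex 0 x) (0 + n)‖ ≤ wt p x * 1 :=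
        mul_le_mul_of_nonneg_left (norm_Q_le hz _ _) (wt_nonneg hp0 hp1 x)
    _ = wt p x := mul_one _

/-- portmanteau generating function at geometric time. -/
theorem stmt0 (p w : ℝ) (hp : 0 < p) (hp1 : p < 1) (hw : 0 < w) (hw1 : w < 1)
    (z : ℕ → ℂ) (hz : ∀ j, ‖z j‖ ≤ 1) :
    ((1 - w : ℝ) : ℂ) * ∑' n : ℕ, (w : ℂ) ^ n *
        ExC p n (fun x => ∏ j ∈ Finset.range n, z (j + 1) ^ runCount x n (j + 1)) =
      ((1 - w : ℝ) : ℂ) * (1 + ∑' j : ℕ, ((w * p : ℝ) : ℂ) ^ (j + 1) * z (j + 1)) /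
        (1 - ((w * (1 - p) : ℝ) : ℂ) -
          ((w * (1 - p) : ℝ) : ℂ) * ∑' j : ℕ, ((w * p : ℝ) : ℂ) ^ (j + 1) * z (j + 1)) := by
  have hwp0 : (0:ℝ) ≤ w * p := by positivity
  have hwp1 : w * p < 1 := by nlinarith
  have hza : ∀ j, ‖zeta z j‖ ≤ 1 := by
    intro j
    unfold zeta
    split
    · simp
    · exact hz j
  set a : ℕ → ℂ := fun j => ((w * p : ℝ) : ℂ) ^ j * zeta z j with ha
  set b : ℕ → ℂ := fun m => (w : ℂ) ^ m * F p z m with hb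
  have hna : ∀ j, ‖a j‖ ≤ (w * p) ^ j := by
    intro j
    rw [ha]
    simp only []
    rw [norm_mul, norm_pow, Complex.norm_real, Real.norm_eq_abs, abs_of_nonneg hwp0]
    calc (w*p)^j * ‖zeta z j‖ ≤ (w*p)^j * 1 :=
          mul_le_mul_of_nonneg_left (hza j) (by positivity)
      _ = (w*p)^j := mul_one _
  have hnb : ∀ m, ‖b m‖ ≤ w ^ m := by
    intro m
    rw [hb]
    simp only []
    rw [norm_mul, norm_pow, Complex.norm_real, Real.norm_eq_abs, abs_of_nonneg hw.le]
    calc w^m * ‖F p z m‖ ≤ w^m * 1 :=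
          mul_le_mul_of_nonneg_left (norm_F_le hp.le hp1.le hz m) (by positivity)
      _ = w^m := mul_one _
  have hsa : Summable (fun j => ‖a j‖) :=
    Summable.of_nonneg_of_le (fun _ => norm_nonneg _) hna
      (summable_geometric_of_lt_one hwp0 hwp1)
  have hsa' : Summable a := hsa.of_norm
  have hsb : Summable (fun m => ‖b m‖) :=
    Summable.of_nonneg_of_le (fun _ => norm_nonneg _) hnb
      (summable_geometric_of_lt_one hw.le hw1)
  have hsb' : Summable b := hsb.of_norm
  set c : ℕ → ℂ := fun n => b n - a n with hc
  have hca : ∀ n, c n = (w:ℂ)^n * ((1:ℂ) - (p:ℂ)) *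
      ∑ j ∈ Finset.range n, (p:ℂ)^j * zeta z j * F p z (n - 1 - j) := by
    intro n
    rw [hc]
    simp only [hb, ha]
    rw [F_rec p z n]
    push_cast
    ring
  have hsc : Summable c := hsb'.sub hsa'
  have hc0 : c 0 = 0 := by rw [hca 0]; simp
  have hcs : ∀ n, c (n + 1) = ((w:ℂ) * (1 - (p:ℂ))) *
      ∑ k ∈ Finset.range (n + 1), a k * b (n - k) := by
    intro n
    rw [hca, Finset.mul_sum, Finset.mul_sum]
    apply Finset.sum_congr rfl
    intro k hk
    simp only [Finset.mem_range] at hk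
    simp only [ha, hb]
    rw [show n + 1 - 1 - k = n - k by omega]
    have hwpow : (w:ℂ)^(n+1) = (w:ℂ) * ((w:ℂ)^k * (w:ℂ)^(n-k)) := by
      rw [← pow_add, ← pow_succ']
      congr 1
      omega
    push_cast
    rw [mul_pow, hwpow]
    ring
  have hΦc : ∑' n, c n = ((w:ℂ) * (1 - (p:ℂ))) * ((∑' n, a n) * (∑' n, b n)) := by
    rw [Summable.tsum_eq_zero_add hsc, hc0, zero_add]
    rw [tsum_mul_tsum_eq_tsum_sum_range_of_summable_norm hsa hsb]
    calc ∑' n, c (n + 1)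
        = ∑' n, ((w:ℂ) * (1 - (p:ℂ))) * ∑ k ∈ Finset.range (n+1), a k * b (n-k) :=
          tsum_congr fun n => hcs n
      _ = _ := tsum_mul_left
  have hΦ : ∑' n, b n = ∑' n, a n + ∑' n, c n := by
    rw [← Summable.tsum_add hsa' hsc]
    exact tsum_congr fun n => by rw [hc]; ring
  have key : ∑' n, b n = ∑' n, a n +
      ((w:ℂ) * (1 - (p:ℂ))) * ((∑' n, a n) * (∑' n, b n)) := by
    conv_lhs => rw [hΦ, hΦc]
  -- identify A with 1 + S
  have ha0 : a 0 = 1 := by simp [ha, zeta]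
  have haS : ∀ j : ℕ, a (j + 1) = ((w * p : ℝ) : ℂ) ^ (j + 1) * z (j + 1) := by
    intro j
    simp [ha, zeta]
  have hA1 : ∑' n, a n = 1 + ∑' j : ℕ, ((w * p : ℝ) : ℂ) ^ (j + 1) * z (j + 1) := by
    rw [Summable.tsum_eq_zero_add hsa', ha0]
    rw [tsum_congr haS]
  -- norm bound on A
  have hnA : ‖∑' n, a n‖ ≤ (1 - w * p)⁻¹ := by
    refine le_trans (norm_tsum_le_tsum_norm hsa) ?_
    rw [← tsum_geometric_of_lt_one hwp0 hwp1]
    exact Summable.tsum_le_tsum hna hsa (summable_geometric_of_lt_one hwp0 hwp1)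
  have hnorm : ‖((w * (1 - p) : ℝ) : ℂ) * ∑' n, a n‖ < 1 := by
    rw [norm_mul, Complex.norm_real, Real.norm_eq_abs,
      abs_of_nonneg (by nlinarith : (0:ℝ) ≤ w * (1 - p))]
    have h2 : w * (1 - p) * ‖∑' n, a n‖ ≤ w * (1 - p) * (1 - w * p)⁻¹ :=
      mul_le_mul_of_nonneg_left hnA (by nlinarith)
    refine lt_of_le_of_lt h2 ?_
    rw [← div_eq_mul_inv, div_lt_one (by linarith : (0:ℝ) < 1 - w * p)]
    nlinarith
  have hden : (1:ℂ) - ((w * (1 - p) : ℝ) : ℂ) * ∑' n, a n ≠ 0 := by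
    intro h0
    rw [sub_eq_zero] at h0
    rw [← h0] at hnorm
    simp at hnorm
  have hExC : ∀ n, ExC p n
      (fun x => ∏ j ∈ Finset.range n, z (j + 1) ^ runCount x n (j + 1)) = F p z n := by
    intro n
    unfold ExC F H
    apply Finset.sum_congr rfl
    intro x _
    congr 1
    calc (∏ j ∈ Finset.range n, z (j + 1) ^ runCount (pad x) n (j + 1))
        = Q z (pad x) n := rfl
      _ = Q z (ex 0 x) (0 + n) := by
          rw [Nat.zero_add]
          exact Q_congr z (fun i hi => by simp [pad, ex, hi])
  have hLHS : (∑' n : ℕ, (w : ℂ) ^ n *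
      ExC p n (fun x => ∏ j ∈ Finset.range n, z (j + 1) ^ runCount x n (j + 1))) =
      ∑' n, b n :=
    tsum_congr fun n => by rw [hExC n]
  rw [hLHS]
  have hdenrw : (1 - ((w * (1 - p) : ℝ) : ℂ) -
      ((w * (1 - p) : ℝ) : ℂ) * ∑' j : ℕ, ((w * p : ℝ) : ℂ) ^ (j + 1) * z (j + 1)) =
      1 - ((w * (1 - p) : ℝ) : ℂ) * ∑' n, a n := by
    rw [hA1]; ring
  rw [hdenrw, ← hA1]
  rw [eq_div_iff hden]
  have hcast : ((w * (1 - p) : ℝ) : ℂ) = (w:ℂ) * (1 - (p:ℂ)) := by push_cast; ring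
  rw [hcast]
  linear_combination (((1 - w : ℝ) : ℂ)) * key
end
end

section
/- Let L(n) be the length of the longest run of 1's in the first n tosses of an i.i.d. Bernoulli(p) sequence, and N* an independent geometric(w) random variable. Then for every ℓ ≥ 1, P(L(N*-1) < ℓ) = (1-w)(1-(wp)^ℓ) / (1 - w + wq·(wp)^ℓ), where q = 1-p. -/
open scoped Classical
open Finset Filter

noncomputable section

lemma wt_snoc (p : ℝ) {n : ℕ} (x : Fin n → Bool) (b : Bool) :
    wt p (Fin.snoc x b) = wt p x * (if b then p else 1 - p) := by
  unfold wt
  rw [Fin.prod_univ_castSucc]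
  simp [Fin.snoc_castSucc]

lemma pad_snoc_lt {n : ℕ} (x : Fin n → Bool) (b : Bool) {i : ℕ} (h : i < n) :
    pad (Fin.snoc x b : Fin (n+1) → Bool) i = pad x i := by
  have h1 : i < n + 1 := by omega
  simp only [pad, dif_pos h, dif_pos h1]
  have : (⟨i, h1⟩ : Fin (n+1)) = Fin.castSucc ⟨i, h⟩ := rfl
  rw [this, Fin.snoc_castSucc]

lemma pad_snoc_self {n : ℕ} (x : Fin n → Bool) (b : Bool) :
    pad (Fin.snoc x b : Fin (n+1) → Bool) n = b := by
  simp only [pad, dif_pos (Nat.lt_succ_self n)]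
  have : (⟨n, Nat.lt_succ_self n⟩ : Fin (n+1)) = Fin.last n := rfl
  rw [this, Fin.snoc_last]

lemma sum_snoc {n : ℕ} (F : (Fin (n+1) → Bool) → ℝ) :
    ∑ x : Fin (n+1) → Bool, F x
      = ∑ y : Fin n → Bool, (F (Fin.snoc y false) + F (Fin.snoc y true)) := by
  rw [← Fintype.sum_equiv (Fin.snocEquiv (fun _ => Bool))
    (fun z => F (Fin.snoc z.2 z.1)) F (fun z => rfl)]
  rw [Fintype.sum_prod_type, Fintype.sum_bool, ← Finset.sum_add_distrib]
  exact Finset.sum_congr rfl (fun y _ => add_comm _ _)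

def DetBy (n : ℕ) (A : Set (ℕ → Bool)) : Prop :=
  ∀ x y : ℕ → Bool, (∀ i < n, x i = y i) → (x ∈ A ↔ y ∈ A)

lemma sum_wt (p : ℝ) (n : ℕ) : ∑ x : Fin n → Bool, wt p x = 1 := by
  induction n with
  | zero => simp [wt]
  | succ n ih =>
      rw [sum_snoc (fun x => wt p x)]
      have h : ∀ y : Fin n → Bool, wt p (Fin.snoc y false) + wt p (Fin.snoc y true) = wt p y := by
        intro y; rw [wt_snoc, wt_snoc]; simp; ring
      rw [Finset.sum_congr rfl (fun y _ => h y), ih]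

lemma Pr_succ (p : ℝ) {n : ℕ} {A : Set (ℕ → Bool)} (hA : DetBy n A) :
    Pr p (n+1) A = Pr p n A := by
  unfold Pr
  rw [sum_snoc (fun x => if pad x ∈ A then wt p x else 0)]
  refine Finset.sum_congr rfl (fun y _ => ?_)
  have hmem : ∀ b : Bool, (pad (Fin.snoc y b : Fin (n+1) → Bool) ∈ A ↔ pad y ∈ A) := by
    intro b
    exact hA _ _ (fun i hi => pad_snoc_lt y b hi)
  by_cases h : pad y ∈ A
  · simp only [if_pos ((hmem false).mpr h), if_pos ((hmem true).mpr h), if_pos h, wt_snoc]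
    simp; ring
  · simp only [if_neg (fun hc => h ((hmem false).mp hc)),
      if_neg (fun hc => h ((hmem true).mp hc)), if_neg h, add_zero]

lemma Pr_cond (p : ℝ) {n : ℕ} {A : Set (ℕ → Bool)} (hA : DetBy n A) (b : Bool) :
    Pr p (n+1) {x | x ∈ A ∧ x n = b} = Pr p n A * (if b then p else 1 - p) := by
  unfold Pr
  rw [sum_snoc]
  rw [Finset.sum_mul]
  refine Finset.sum_congr rfl (fun y _ => ?_)
  have hmem : ∀ c : Bool, (pad (Fin.snoc y c : Fin (n+1) → Bool) ∈ A ↔ pad y ∈ A) := by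
    intro c
    exact hA _ _ (fun i hi => pad_snoc_lt y c hi)
  simp only [Set.mem_setOf_eq, pad_snoc_self, wt_snoc]
  by_cases h : pad y ∈ A
  · cases b
    · simp [hmem, h]
    · simp [hmem, h]
  · simp [hmem, h]


/-- no run of `ℓ` consecutive ones within the first `n` positions -/
def NoRun (ℓ n : ℕ) (x : ℕ → Bool) : Prop :=
  ∀ i, i + ℓ ≤ n → ∃ k < ℓ, x (i + k) = false

lemma longestRun_lt_iff {x : ℕ → Bool} {n ℓ : ℕ} (hℓ : 1 ≤ ℓ) :
    longestRun x n < ℓ ↔ NoRun ℓ n x := by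
  unfold longestRun
  rw [Finset.sup_lt_iff (by simp; omega : (⊥ : ℕ) < ℓ)]
  constructor
  · intro h i hi
    by_contra hc
    push_neg at hc
    have hall : ∀ k < ℓ, x (i + k) = true := by
      intro k hk
      have := hc k hk
      simpa using this
    have hmem : ℓ ∈ Finset.range (n+1) := by
      rw [Finset.mem_range]; omega
    have := h ℓ hmem
    rw [if_pos ⟨i, hi, hall⟩] at this
    omega
  · intro h b hb
    split_ifs with hex
    · obtain ⟨i, hib, hall⟩ := hex
      by_contra hbl
      push_neg at hbl
      have hi : i + ℓ ≤ n := by omega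
      obtain ⟨k, hk, hf⟩ := h i hi
      have := hall k (by omega)
      rw [this] at hf
      exact Bool.noConfusion hf
    · omega

lemma detBy_noRun (ℓ n : ℕ) : DetBy n {x | NoRun ℓ n x} := by
  have key : ∀ x y : ℕ → Bool, (∀ i < n, x i = y i) → NoRun ℓ n x → NoRun ℓ n y := by
    intro x y hxy hx i hi
    obtain ⟨k, hk, hf⟩ := hx i hi
    exact ⟨k, hk, by rw [← hxy _ (by omega)]; exact hf⟩
  intro x y hxy
  exact ⟨key x y hxy, key y x (fun i hi => (hxy i hi).symm)⟩

/-- all of the first `j` tosses are heads -/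
def AllT (j : ℕ) : Set (ℕ → Bool) := {x | ∀ k < j, x k = true}

lemma detBy_allT (j : ℕ) : DetBy j (AllT j) := by
  intro x y hxy
  constructor
  · intro hx k hk; rw [← hxy _ hk]; exact hx k hk
  · intro hy k hk; rw [hxy _ hk]; exact hy k hk

/-- the difference event -/
lemma diff_eq {ℓ : ℕ} (hℓ : 1 ≤ ℓ) (m : ℕ) (x : ℕ → Bool) :
    (NoRun ℓ (ℓ+m) x ∧ ¬ NoRun ℓ (ℓ+m+1) x) ↔
      (NoRun ℓ m x ∧ x m = false ∧ ∀ k < ℓ, x (m+1+k) = true) := by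
  constructor
  · rintro ⟨h1, h2⟩
    unfold NoRun at h2
    push_neg at h2
    obtain ⟨i, hi, hall'⟩ := h2
    have hall : ∀ k < ℓ, x (i + k) = true := by
      intro k hk; have := hall' k hk; simpa using this
    have him : i = m + 1 := by
      by_contra hne
      have : i + ℓ ≤ ℓ + m := by omega
      obtain ⟨k, hk, hf⟩ := h1 i this
      rw [hall k hk] at hf
      exact Bool.noConfusion hf
    subst him
    refine ⟨?_, ?_, ?_⟩
    · intro i' hi'
      exact h1 i' (by omega)
    · by_contra hmf
      have hmt : x m = true := by simpa using hmf
      obtain ⟨k, hk, hf⟩ := h1 m (by omega)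
      rcases Nat.eq_zero_or_pos k with hk0 | hkpos
      · subst hk0; rw [Nat.add_zero, hmt] at hf; exact Bool.noConfusion hf
      · have : x (m + k) = true := by
          have := hall (k - 1) (by omega)
          have he : m + 1 + (k - 1) = m + k := by omega
          rwa [he] at this
        rw [this] at hf
        exact Bool.noConfusion hf
    · intro k hk; exact hall k hk
  · rintro ⟨h1, hf, ht⟩
    constructor
    · intro i hi
      rcases le_or_gt (i + ℓ) m with hcase | hcase
      · exact h1 i hcase
      · rcases le_or_gt i m with hi' | hi'
        · exact ⟨m - i, by omega, by rw [show i + (m - i) = m by omega]; exact hf⟩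
        · omega
    · intro hc
      obtain ⟨k, hk, hfk⟩ := hc (m+1) (by omega)
      rw [ht k hk] at hfk
      exact Bool.noConfusion hfk

def En (ℓ n : ℕ) : Set (ℕ → Bool) := {x | NoRun ℓ n x}

def aSeq (p : ℝ) (ℓ n : ℕ) : ℝ := Pr p n (En ℓ n)

lemma Pr_congr (p : ℝ) (n : ℕ) {A B : Set (ℕ → Bool)} (h : ∀ x, x ∈ A ↔ x ∈ B) :
    Pr p n A = Pr p n B := by
  unfold Pr
  exact Finset.sum_congr rfl fun x _ => by rw [if_congr (h _) rfl rfl]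

lemma Pr_split (p : ℝ) (n : ℕ) {A B C : Set (ℕ → Bool)}
    (h : ∀ x, x ∈ A ↔ (x ∈ B ∨ x ∈ C)) (hd : ∀ x, ¬(x ∈ B ∧ x ∈ C)) :
    Pr p n A = Pr p n B + Pr p n C := by
  unfold Pr
  rw [← Finset.sum_add_distrib]
  refine Finset.sum_congr rfl fun x _ => ?_
  by_cases hb : pad x ∈ B
  · rw [if_pos ((h _).mpr (Or.inl hb)), if_pos hb, if_neg (fun hc => hd _ ⟨hb, hc⟩)]; ring
  · by_cases hc : pad x ∈ C
    · rw [if_pos ((h _).mpr (Or.inr hc)), if_neg hb, if_pos hc]; ring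
    · rw [if_neg (fun ha => ((h _).mp ha).elim hb hc), if_neg hb, if_neg hc]; ring

lemma Pr_allT (p : ℝ) (j : ℕ) : Pr p j (AllT j) = p ^ j := by
  induction j with
  | zero =>
      have : ∀ x : Fin 0 → Bool, (if pad x ∈ AllT 0 then wt p x else 0) = 1 := by
        intro x
        rw [if_pos (show pad x ∈ AllT 0 from fun k hk => absurd hk (Nat.not_lt_zero k))]
        simp [wt]
      unfold Pr
      rw [Finset.sum_congr rfl fun x _ => this x]
      simp
  | succ j ih =>
      have hiff : ∀ x : ℕ → Bool, x ∈ AllT (j+1) ↔ x ∈ {x | x ∈ AllT j ∧ x j = true} := by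
        intro x
        constructor
        · intro h; exact ⟨fun k hk => h k (by omega), h j (by omega)⟩
        · rintro ⟨h1, h2⟩ k hk
          rcases Nat.lt_or_ge k j with h | h
          · exact h1 k h
          · have hkj : k = j := by omega
            subst hkj; exact h2
      rw [Pr_congr p (j+1) hiff, Pr_cond p (detBy_allT j) true, ih]
      simp [pow_succ]

lemma aSeq_lt (p : ℝ) {ℓ n : ℕ} (h : n < ℓ) : aSeq p ℓ n = 1 := by
  unfold aSeq En Pr
  rw [← sum_wt p n]
  refine Finset.sum_congr rfl fun x _ => ?_
  exact if_pos (fun i hi => absurd hi (by omega))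

lemma aSeq_level (p : ℝ) {ℓ : ℕ} (hℓ : 1 ≤ ℓ) : aSeq p ℓ ℓ = 1 - p ^ ℓ := by
  have h1 : Pr p ℓ Set.univ = 1 := by
    unfold Pr
    rw [← sum_wt p ℓ]
    exact Finset.sum_congr rfl fun x _ => if_pos (Set.mem_univ _)
  have hsplit : Pr p ℓ Set.univ = aSeq p ℓ ℓ + Pr p ℓ (AllT ℓ) := by
    apply Pr_split
    · intro x
      constructor
      · intro _
        by_cases ht : ∀ k < ℓ, x k = true
        · exact Or.inr ht
        · push_neg at ht
          obtain ⟨k, hk, hkf⟩ := ht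
          have hkf' : x k = false := by simpa using hkf
          refine Or.inl (fun i hi => ?_)
          have hi0 : i = 0 := by omega
          subst hi0
          exact ⟨k, hk, by rw [Nat.zero_add]; exact hkf'⟩
      · intro _; exact Set.mem_univ x
    · rintro x ⟨hb, hc⟩
      obtain ⟨k, hk, hf⟩ := hb 0 (by omega)
      rw [Nat.zero_add] at hf
      rw [hc k hk] at hf
      exact Bool.noConfusion hf
  rw [h1, Pr_allT] at hsplit
  linarith

def Gset (ℓ m j : ℕ) : Set (ℕ → Bool) :=
  {x | NoRun ℓ m x ∧ x m = false ∧ ∀ k < j, x (m+1+k) = true}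

lemma detBy_G (ℓ m j : ℕ) : DetBy (m+1+j) (Gset ℓ m j) := by
  have key : ∀ x y : ℕ → Bool, (∀ i < m+1+j, x i = y i) → x ∈ Gset ℓ m j → y ∈ Gset ℓ m j := by
    rintro x y hxy ⟨h1, h2, h3⟩
    refine ⟨fun i hi => ?_, ?_, fun k hk => ?_⟩
    · obtain ⟨k, hk, hf⟩ := h1 i hi
      exact ⟨k, hk, by rw [← hxy _ (by omega)]; exact hf⟩
    · rw [← hxy m (by omega)]; exact h2
    · rw [← hxy _ (by omega)]; exact h3 k hk
  intro x y hxy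
  exact ⟨key x y hxy, key y x (fun i hi => (hxy i hi).symm)⟩

lemma pr_G (p : ℝ) (ℓ m : ℕ) (j : ℕ) :
    Pr p (m+1+j) (Gset ℓ m j) = (1-p) * p^j * aSeq p ℓ m := by
  induction j with
  | zero =>
      have hiff : ∀ x : ℕ → Bool, x ∈ Gset ℓ m 0 ↔ x ∈ {x | x ∈ En ℓ m ∧ x m = false} := by
        intro x
        constructor
        · rintro ⟨h1, h2, _⟩; exact ⟨h1, h2⟩
        · rintro ⟨h1, h2⟩; exact ⟨h1, h2, fun k hk => absurd hk (by omega)⟩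
      have hdet : DetBy m (En ℓ m) := detBy_noRun ℓ m
      rw [Pr_congr p (m+1+0) hiff, show m+1+0 = m+1 from rfl, Pr_cond p hdet false]
      unfold aSeq
      simp; ring
  | succ j ih =>
      have hiff : ∀ x : ℕ → Bool,
          x ∈ Gset ℓ m (j+1) ↔ x ∈ {x | x ∈ Gset ℓ m j ∧ x (m+1+j) = true} := by
        intro x
        constructor
        · rintro ⟨h1, h2, h3⟩
          exact ⟨⟨h1, h2, fun k hk => h3 k (by omega)⟩, h3 j (by omega)⟩
        · rintro ⟨⟨h1, h2, h3⟩, h4⟩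
          refine ⟨h1, h2, fun k hk => ?_⟩
          rcases Nat.lt_or_ge k j with h | h
          · exact h3 k h
          · have hkj : k = j := by omega
            subst hkj; exact h4
      rw [Pr_congr p (m+1+(j+1)) hiff, show m+1+(j+1) = (m+1+j)+1 from rfl,
        Pr_cond p (detBy_G ℓ m j) true, ih]
      simp [pow_succ]; ring

lemma aSeq_rec (p : ℝ) {ℓ : ℕ} (hℓ : 1 ≤ ℓ) (m : ℕ) :
    aSeq p ℓ (ℓ+m+1) = aSeq p ℓ (ℓ+m) - (1-p) * p^ℓ * aSeq p ℓ m := by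
  have h1 : aSeq p ℓ (ℓ+m) = Pr p (ℓ+m+1) (En ℓ (ℓ+m)) :=
    (Pr_succ p (detBy_noRun ℓ (ℓ+m))).symm
  have hsplit : Pr p (ℓ+m+1) (En ℓ (ℓ+m)) =
      Pr p (ℓ+m+1) (En ℓ (ℓ+m+1)) + Pr p (ℓ+m+1) (Gset ℓ m ℓ) := by
    apply Pr_split
    · intro x
      constructor
      · intro hx
        by_cases hb : x ∈ En ℓ (ℓ+m+1)
        · exact Or.inl hb
        · exact Or.inr ((diff_eq hℓ m x).mp ⟨hx, hb⟩)
      · rintro (hb | hc)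
        · intro i hi; exact hb i (by omega)
        · exact ((diff_eq hℓ m x).mpr hc).1
    · rintro x ⟨hb, hc⟩
      exact ((diff_eq hℓ m x).mpr hc).2 hb
  have hg : Pr p (ℓ+m+1) (Gset ℓ m ℓ) = (1-p) * p^ℓ * aSeq p ℓ m := by
    rw [show ℓ+m+1 = m+1+ℓ by omega]
    exact pr_G p ℓ m ℓ
  have : aSeq p ℓ (ℓ+m+1) = Pr p (ℓ+m+1) (En ℓ (ℓ+m+1)) := rfl
  rw [this]
  linarith


set_option maxHeartbeats 2000000 in
/-- distribution function of the longest run at an independent geometric time. -/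
theorem stmt2 (p w : ℝ) (hp : 0 < p) (hp1 : p < 1) (hw : 0 < w) (hw1 : w < 1)
    (ℓ : ℕ) (hℓ : 1 ≤ ℓ) :
    (1 - w) * ∑' n : ℕ, w ^ n * Pr p n {x | longestRun x n < ℓ} =
      (1 - w) * (1 - (w * p) ^ ℓ) / (1 - w + w * (1 - p) * (w * p) ^ ℓ) := by
  have hset : ∀ n : ℕ, Pr p n {x | longestRun x n < ℓ} = aSeq p ℓ n := fun n =>
    Pr_congr p n (fun x => longestRun_lt_iff hℓ)
  simp only [hset]
  -- basic bounds on aSeq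
  have hwt : ∀ {n : ℕ} (x : Fin n → Bool), 0 ≤ wt p x := by
    intro n x
    apply Finset.prod_nonneg
    intro i _
    split_ifs <;> linarith
  have ha0 : ∀ n, 0 ≤ aSeq p ℓ n := by
    intro n
    apply Finset.sum_nonneg
    intro x _
    split_ifs
    · exact hwt x
    · exact le_rfl
  have ha1 : ∀ n, aSeq p ℓ n ≤ 1 := by
    intro n
    rw [← sum_wt p n]
    apply Finset.sum_le_sum
    intro x _
    split_ifs
    · exact le_rfl
    · exact hwt x
  have hg0 : ∀ n, 0 ≤ w ^ n * aSeq p ℓ n := fun n =>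
    mul_nonneg (pow_nonneg hw.le n) (ha0 n)
  have hsum : Summable (fun n => w ^ n * aSeq p ℓ n) := by
    refine Summable.of_nonneg_of_le hg0 (fun n => ?_)
      (summable_geometric_of_lt_one hw.le hw1)
    calc w ^ n * aSeq p ℓ n ≤ w ^ n * 1 :=
          mul_le_mul_of_nonneg_left (ha1 n) (pow_nonneg hw.le n)
      _ = w ^ n := mul_one _
  have hsum1 : Summable (fun n => w ^ (n + ℓ) * aSeq p ℓ (n + ℓ)) :=
    (summable_nat_add_iff (f := fun n => w ^ n * aSeq p ℓ n) ℓ).mpr hsum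
  have hrec : ∀ n : ℕ, w ^ (n + (ℓ+1)) * aSeq p ℓ (n + (ℓ+1)) =
      w * (w ^ (n + ℓ) * aSeq p ℓ (n + ℓ)) -
        (1-p) * p^ℓ * w^(ℓ+1) * (w ^ n * aSeq p ℓ n) := by
    intro n
    have e1 : n + (ℓ+1) = ℓ + n + 1 := by omega
    have e2 : n + ℓ = ℓ + n := by omega
    rw [e1, e2, aSeq_rec p hℓ n]
    rw [pow_succ, pow_add, pow_add, pow_succ]
    ring
  have E1 : ∑ i ∈ Finset.range ℓ, w ^ i * aSeq p ℓ i +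
      ∑' n : ℕ, w ^ (n + ℓ) * aSeq p ℓ (n + ℓ) = ∑' n : ℕ, w ^ n * aSeq p ℓ n :=
    Summable.sum_add_tsum_nat_add ℓ hsum
  have E2 : ∑ i ∈ Finset.range (ℓ+1), w ^ i * aSeq p ℓ i +
      ∑' n : ℕ, w ^ (n + (ℓ+1)) * aSeq p ℓ (n + (ℓ+1)) = ∑' n : ℕ, w ^ n * aSeq p ℓ n :=
    Summable.sum_add_tsum_nat_add (ℓ+1) hsum
  have E3 : ∑' n : ℕ, w ^ (n + (ℓ+1)) * aSeq p ℓ (n + (ℓ+1)) =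
      w * ∑' n : ℕ, w ^ (n + ℓ) * aSeq p ℓ (n + ℓ) -
        (1-p) * p^ℓ * w^(ℓ+1) * ∑' n : ℕ, w ^ n * aSeq p ℓ n := by
    rw [tsum_congr hrec, Summable.tsum_sub (hsum1.mul_left w) (hsum.mul_left _),
      tsum_mul_left, tsum_mul_left]
  have hS1 : ∑ i ∈ Finset.range ℓ, w ^ i * aSeq p ℓ i = ∑ i ∈ Finset.range ℓ, w ^ i := by
    refine Finset.sum_congr rfl fun i hi => ?_
    rw [Finset.mem_range] at hi
    rw [aSeq_lt p hi, mul_one]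
  have hS2 : ∑ i ∈ Finset.range (ℓ+1), w ^ i * aSeq p ℓ i =
      (∑ i ∈ Finset.range ℓ, w ^ i) + w ^ ℓ * (1 - p ^ ℓ) := by
    rw [Finset.sum_range_succ, hS1, aSeq_level p hℓ]
  have hgeo : (∑ i ∈ Finset.range ℓ, w ^ i) * (w - 1) = w ^ ℓ - 1 := geom_sum_mul w ℓ
  rw [hS1] at E1
  rw [hS2] at E2
  have key : (∑' n : ℕ, w ^ n * aSeq p ℓ n) * (1 - w + (1-p) * p^ℓ * w^(ℓ+1)) =
      1 - w ^ ℓ * p ^ ℓ := by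
    linear_combination w * E1 - E2 + E3 - hgeo
  have hD : 0 < 1 - w + w * (1 - p) * (w * p) ^ ℓ := by
    have h1 : 0 < 1 - w := by linarith
    have h2 : 0 < w * (1 - p) * (w * p) ^ ℓ := by
      apply mul_pos (mul_pos hw (by linarith))
      exact pow_pos (mul_pos hw hp) ℓ
    linarith
  rw [eq_div_iff (ne_of_gt hD)]
  simp only [mul_pow]
  linear_combination (1 - w) * key
end
end
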